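/- If (v_n) is a dense sequence in the unit sphere of ℓ₁, then for any two distinct elements x, y of ℓ∞ there exists k with ⟨x, v_k⟩ and ⟨y, v_k⟩ both nonzero and of opposite signs, provided y is not a nonnegative multiple of x and x is not a nonnegative multiple of y. -/

import Mathlib

open Filter Topology

/-- The duality pairing `⟨x, v⟩ = ∑ₖ x k * v k`. -/
noncomputable def pairing (x v : ℕ → ℝ) : ℝ := ∑' k, x k * v k

lemma aux_summable_two (i j : ℕ) (c d : ℝ) :
    Summable (fun k => if k = i then c else if k = j then d else 0) := by
  apply summable_of_ne_finset_zero (s := {i, j})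
  intro b hb
  simp only [Finset.mem_insert, Finset.mem_singleton, not_or] at hb
  simp [hb.1, hb.2]

lemma aux_tsum_pair (i j : ℕ) (hij : i ≠ j) (g : ℕ → ℝ)
    (hg : ∀ b, b ≠ i → b ≠ j → g b = 0) :
    ∑' k, g k = g i + g j := by
  rw [tsum_eq_sum (s := {i, j}) (by
    intro b hb
    simp only [Finset.mem_insert, Finset.mem_singleton, not_or] at hb
    exact hg b hb.1 hb.2)]
  rw [Finset.sum_pair hij]

lemma aux_summable_abs_two (i j : ℕ) (c d : ℝ) :
    Summable (fun k => |if k = i then c else if k = j then d else 0|) := by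
  have : (fun k => |if k = i then c else if k = j then d else 0|)
      = fun k => if k = i then |c| else if k = j then |d| else 0 := by
    funext k; split_ifs <;> simp
  rw [this]; exact aux_summable_two i j _ _

lemma aux_norm_two (i j : ℕ) (hij : i ≠ j) (c d : ℝ) :
    ∑' k, |if k = i then c else if k = j then d else 0| = |c| + |d| := by
  have : (fun k => |if k = i then c else if k = j then d else 0|)
      = fun k => if k = i then |c| else if k = j then |d| else 0 := by
    funext k; split_ifs <;> simp
  rw [this, aux_tsum_pair i j hij _ (by intro b hb1 hb2; simp [hb1, hb2])]
  simp [hij.symm]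

lemma aux_pairing_two (x : ℕ → ℝ) (i j : ℕ) (hij : i ≠ j) (c d : ℝ) :
    pairing x (fun k => if k = i then c else if k = j then d else 0)
      = x i * c + x j * d := by
  rw [pairing, aux_tsum_pair i j hij _ (by intro b hb1 hb2; simp [hb1, hb2])]
  simp [hij.symm]

lemma aux_pairing_bound (x w u : ℕ → ℝ) (C : ℝ) (hC : ∀ k, |x k| ≤ C)
    (hw : Summable fun k => |w k|) (hu : Summable fun k => |u k|) :
    |pairing x u - pairing x w| ≤ C * ∑' k, |u k - w k| := by
  have hxw : Summable fun k => x k * w k := by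
    apply Summable.of_abs
    apply Summable.of_nonneg_of_le (fun k => abs_nonneg _) (fun k => ?_) (hw.mul_left C)
    rw [abs_mul]
    exact mul_le_mul_of_nonneg_right (hC k) (abs_nonneg _)
  have hxu : Summable fun k => x k * u k := by
    apply Summable.of_abs
    apply Summable.of_nonneg_of_le (fun k => abs_nonneg _) (fun k => ?_) (hu.mul_left C)
    rw [abs_mul]
    exact mul_le_mul_of_nonneg_right (hC k) (abs_nonneg _)
  have hd : Summable fun k => |u k - w k| := by
    apply Summable.of_nonneg_of_le (fun k => abs_nonneg _) (fun k => abs_sub _ _) (hu.add hw)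
  have hxd : Summable fun k => |x k * (u k - w k)| := by
    apply Summable.of_nonneg_of_le (fun k => abs_nonneg _) (fun k => ?_) (hd.mul_left C)
    rw [abs_mul]
    exact mul_le_mul_of_nonneg_right (hC k) (abs_nonneg _)
  rw [pairing, pairing, ← Summable.tsum_sub hxu hxw]
  have heq : (fun k => x k * u k - x k * w k) = fun k => x k * (u k - w k) := by
    funext k; ring
  rw [heq]
  calc |∑' k, x k * (u k - w k)| ≤ ∑' k, |x k * (u k - w k)| := by
        have h := norm_tsum_le_tsum_norm (f := fun k => x k * (u k - w k))
          (by simpa only [Real.norm_eq_abs] using hxd)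
        simpa only [Real.norm_eq_abs] using h
    _ ≤ ∑' k, C * |u k - w k| := by
        apply Summable.tsum_le_tsum _ hxd (hd.mul_left C)
        intro k
        rw [abs_mul]
        exact mul_le_mul_of_nonneg_right (hC k) (abs_nonneg _)
    _ = C * ∑' k, |u k - w k| := tsum_mul_left

lemma aux_sign_of_close (A a : ℝ) (h : |A - a| < |a|) : 0 < A * a := by
  rcases abs_sub_lt_iff.mp h with ⟨h1, h2⟩
  rcases lt_trichotomy a 0 with ha | ha | ha
  · rw [abs_of_neg ha] at h1 h2; nlinarith
  · rw [ha, abs_zero] at h; exact absurd (abs_nonneg _) (not_le.2 h)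
  · rw [abs_of_pos ha] at h1 h2; nlinarith

/-- If `(vₙ)` is a dense sequence in the unit sphere of `ℓ₁`, then for any two distinct
elements `x, y` of `ℓ∞`, neither of which is a nonnegative multiple of the other, there
exists `k` with `⟨x, v_k⟩` and `⟨y, v_k⟩` both nonzero and of opposite signs. -/
theorem exists_pairing_opposite_signs
    (v : ℕ → ℕ → ℝ) (hv1 : ∀ n, Summable fun k => |v n k|)
    (hv2 : ∀ n, ∑' k, |v n k| = 1)
    (hdense : ∀ w : ℕ → ℝ, (Summable fun k => |w k|) → ∑' k, |w k| = 1 →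
      ∀ ε > 0, ∃ n, ∑' k, |w k - v n k| < ε)
    (x y : ℕ → ℝ) (hx : ∃ C, ∀ k, |x k| ≤ C) (hy : ∃ C, ∀ k, |y k| ≤ C)
    (hne : x ≠ y)
    (h1 : ¬ ∃ a : ℝ, 0 ≤ a ∧ y = a • x)
    (h2 : ¬ ∃ a : ℝ, 0 ≤ a ∧ x = a • y) :
    ∃ k, pairing x (v k) ≠ 0 ∧ pairing y (v k) ≠ 0 ∧
      pairing x (v k) * pairing y (v k) < 0 := by
  obtain ⟨Cx, hCx⟩ := hx
  obtain ⟨Cy, hCy⟩ := hy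
  obtain ⟨C, hCdef⟩ : ∃ C : ℝ, C = max Cx Cy := ⟨_, rfl⟩
  have hCx' : ∀ k, |x k| ≤ C := fun k => hCdef ▸ (hCx k).trans (le_max_left _ _)
  have hCy' : ∀ k, |y k| ≤ C := fun k => hCdef ▸ (hCy k).trans (le_max_right _ _)
  have hC0 : 0 ≤ C := le_trans (abs_nonneg _) (hCx' 0)
  -- Step 1: find a norm-one w with pairings of opposite signs
  obtain ⟨w, hwsum, hwnorm, hab⟩ :
      ∃ w : ℕ → ℝ, (Summable fun k => |w k|) ∧ (∑' k, |w k| = 1) ∧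
        pairing x w * pairing y w < 0 := by
    by_cases hind : ∃ i j, x i * y j - x j * y i ≠ 0
    · obtain ⟨i, j, hD0⟩ := hind
      have hij : i ≠ j := by rintro rfl; exact hD0 (by ring)
      obtain ⟨D, hDdef⟩ : ∃ D : ℝ, D = x i * y j - x j * y i := ⟨_, rfl⟩
      have hD : D ≠ 0 := by rw [hDdef]; exact hD0
      obtain ⟨c0, hc0⟩ : ∃ c0 : ℝ, c0 = (y j + x j) / D := ⟨_, rfl⟩
      obtain ⟨d0, hd0⟩ : ∃ d0 : ℝ, d0 = -(y i + x i) / D := ⟨_, rfl⟩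
      have hcx : c0 * x i + d0 * x j = 1 := by
        have e : c0 * x i + d0 * x j = D / D := by rw [hc0, hd0, hDdef]; ring
        rw [e, div_self hD]
      have hcy : c0 * y i + d0 * y j = -1 := by
        have e : c0 * y i + d0 * y j = -(D / D) := by rw [hc0, hd0, hDdef]; ring
        rw [e, div_self hD]
      obtain ⟨s, hsdef⟩ : ∃ s : ℝ, s = |c0| + |d0| := ⟨_, rfl⟩
      have hs : 0 < s := by
        rcases eq_or_ne c0 0 with h | h
        · rcases eq_or_ne d0 0 with h' | h'
          · exfalso; rw [h, h'] at hcx; norm_num at hcx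
          · have h'' := abs_pos.2 h'
            rw [hsdef]
            have := abs_nonneg c0
            linarith
        · have h'' := abs_pos.2 h
          rw [hsdef]
          have := abs_nonneg d0
          linarith
      refine ⟨fun k => if k = i then c0 / s else if k = j then d0 / s else 0,
        aux_summable_abs_two i j _ _, ?_, ?_⟩
      · rw [aux_norm_two i j hij, abs_div, abs_div, abs_of_pos hs, ← add_div,
          ← hsdef, div_self hs.ne']
      · have hpx : pairing x (fun k => if k = i then c0 / s else if k = j then d0 / s else 0)
            = 1 / s := by
          rw [aux_pairing_two x i j hij]
          rw [show x i * (c0 / s) + x j * (d0 / s) = (c0 * x i + d0 * x j) / s from by ring, hcx]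
        have hpy : pairing y (fun k => if k = i then c0 / s else if k = j then d0 / s else 0)
            = -1 / s := by
          rw [aux_pairing_two y i j hij]
          rw [show y i * (c0 / s) + y j * (d0 / s) = (c0 * y i + d0 * y j) / s from by ring, hcy]
        rw [hpx, hpy, show (1 : ℝ) / s * (-1 / s) = -(1 / s ^ 2) from by ring]
        have : (0:ℝ) < 1 / s ^ 2 := by positivity
        linarith
    · push_neg at hind
      have hx0 : x ≠ 0 := by
        rintro rfl
        exact h2 ⟨0, le_refl 0, by funext k; simp⟩
      obtain ⟨i, hi⟩ : ∃ i, x i ≠ 0 := by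
        by_contra h
        push_neg at h
        exact hx0 (funext h)
      obtain ⟨a, hadef⟩ : ∃ a : ℝ, a = y i / x i := ⟨_, rfl⟩
      have hy' : y = a • x := by
        funext k
        have h := hind i k
        simp only [Pi.smul_apply, smul_eq_mul, hadef]
        field_simp
        linarith
      have ha : a < 0 := by
        by_contra h
        push_neg at h
        exact h1 ⟨a, h, hy'⟩
      have hij : i ≠ i + 1 := by omega
      refine ⟨fun k => if k = i then 1 else if k = i + 1 then 0 else 0,
        aux_summable_abs_two i (i+1) _ _, ?_, ?_⟩
      · rw [aux_norm_two i (i+1) hij]; norm_num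
      · have hpx : pairing x (fun k => if k = i then (1:ℝ) else if k = i + 1 then 0 else 0)
            = x i := by rw [aux_pairing_two x i (i+1) hij]; ring
        have hpy : pairing y (fun k => if k = i then (1:ℝ) else if k = i + 1 then 0 else 0)
            = a * x i := by
          rw [aux_pairing_two y i (i+1) hij, hy']
          simp only [Pi.smul_apply, smul_eq_mul]
          ring
        rw [hpx, hpy]
        have hx2 : 0 < x i * x i := mul_self_pos.2 hi
        nlinarith
  -- Step 2: approximate w by some v n
  obtain ⟨A0, hA0⟩ : ∃ A0 : ℝ, A0 = pairing x w := ⟨_, rfl⟩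
  obtain ⟨B0, hB0⟩ : ∃ B0 : ℝ, B0 = pairing y w := ⟨_, rfl⟩
  rw [← hA0, ← hB0] at hab
  have ha0 : A0 ≠ 0 := by intro h; rw [h, zero_mul] at hab; exact lt_irrefl _ hab
  have hb0 : B0 ≠ 0 := by intro h; rw [h, mul_zero] at hab; exact lt_irrefl _ hab
  obtain ⟨m, hmdef⟩ : ∃ m : ℝ, m = min |A0| |B0| := ⟨_, rfl⟩
  have hm0 : 0 < m := hmdef ▸ lt_min (abs_pos.2 ha0) (abs_pos.2 hb0)
  have hC1 : (0:ℝ) < C + 1 := by linarith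
  have hε0 : 0 < m / (C + 1) := div_pos hm0 hC1
  obtain ⟨n, hn⟩ := hdense w hwsum hwnorm (m / (C + 1)) hε0
  have hwv : (fun k => |w k - v n k|) = fun k => |v n k - w k| := by
    funext k; exact abs_sub_comm _ _
  rw [hwv] at hn
  have hCε : C * ∑' k, |v n k - w k| < m := by
    have h2' : C * ∑' k, |v n k - w k| ≤ C * (m / (C + 1)) :=
      mul_le_mul_of_nonneg_left hn.le hC0
    have h3' : C * (m / (C + 1)) < m := by
      rw [mul_div_assoc', div_lt_iff₀ hC1]
      nlinarith
    linarith
  have hAx := aux_pairing_bound x w (v n) C hCx' hwsum (hv1 n)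
  have hAy := aux_pairing_bound y w (v n) C hCy' hwsum (hv1 n)
  rw [← hA0] at hAx
  rw [← hB0] at hAy
  have hx1 : |pairing x (v n) - A0| < |A0| := by
    have := lt_of_lt_of_le hCε (hmdef ▸ min_le_left |A0| |B0|)
    linarith
  have hy1 : |pairing y (v n) - B0| < |B0| := by
    have := lt_of_lt_of_le hCε (hmdef ▸ min_le_right |A0| |B0|)
    linarith
  have hAa := aux_sign_of_close _ _ hx1
  have hBb := aux_sign_of_close _ _ hy1
  have key : pairing x (v n) * pairing y (v n) < 0 := by
    by_contra hc
    push_neg at hc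
    have h3 : (pairing x (v n) * pairing y (v n)) * (A0 * B0) ≤ 0 :=
      mul_nonpos_of_nonneg_of_nonpos hc hab.le
    nlinarith [mul_pos hAa hBb]
  refine ⟨n, ?_, ?_, key⟩
  · intro h; rw [h, zero_mul] at key; exact lt_irrefl _ key
  · intro h; rw [h, mul_zero] at key; exact lt_irrefl _ key
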